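/- For every k ≥ 1 and every set B ⊆ ℕ, if (1 + X + X^{2^k})·(Σ_{b∈B} X^b) = 1 + X + ... + X^{N-1} in F_2[X] for some N, then |B| ≥ 4^k - 3^k (equivalently N ≥ 4^k - 1): the compact mod-2 tiling of {0,1,2^k} constructed greedily is minimal. -/

import Mathlib

open Polynomial

/-- `dj a b` : binary representations of `a` and `b` are disjoint. -/
def dj (a b : ℕ) : Bool :=
  if h : b = 0 then true
  else if a % 2 = 1 ∧ b % 2 = 1 then false
  else dj (a / 2) (b / 2)
termination_by b
decreasing_by exact Nat.div_lt_self (Nat.pos_of_ne_zero h) one_lt_two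

lemma dj_zero_right (a : ℕ) : dj a 0 = true := by rw [dj]; simp

lemma dj_step (a b : ℕ) (hb : b ≠ 0) :
    dj a b = if a % 2 = 1 ∧ b % 2 = 1 then false else dj (a / 2) (b / 2) := by
  rw [dj]; simp [hb]

lemma dj_ee (a b : ℕ) : dj (2*a) (2*b) = dj a b := by
  rcases Nat.eq_zero_or_pos b with rfl | hb
  · simp [dj_zero_right]
  · rw [dj_step _ _ (by omega)]
    have h1 : (2*a) % 2 = 0 := by omega
    have h2 : (2*a) / 2 = a := by omega
    have h3 : (2*b) / 2 = b := by omega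
    simp [h1, h2, h3]

lemma dj_oe (a b : ℕ) : dj (2*a+1) (2*b) = dj a b := by
  rcases Nat.eq_zero_or_pos b with rfl | hb
  · simp [dj_zero_right]
  · rw [dj_step _ _ (by omega)]
    have h1 : (2*b) % 2 = 0 := by omega
    have h2 : (2*a+1) / 2 = a := by omega
    have h3 : (2*b) / 2 = b := by omega
    simp [h1, h2, h3]

lemma dj_eo (a b : ℕ) : dj (2*a) (2*b+1) = dj a b := by
  rw [dj_step _ _ (by omega)]
  have h1 : (2*a) % 2 = 0 := by omega
  have h2 : (2*a) / 2 = a := by omega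
  have h3 : (2*b+1) / 2 = b := by omega
  simp [h1, h2, h3]

lemma dj_oo (a b : ℕ) : dj (2*a+1) (2*b+1) = false := by
  rw [dj_step _ _ (by omega)]
  have h1 : (2*a+1) % 2 = 1 := by omega
  have h2 : (2*b+1) % 2 = 1 := by omega
  simp [h1, h2]

lemma dj_zero_left (b : ℕ) : dj 0 b = true := by
  induction b using Nat.strong_induction_on with
  | _ b ih =>
    rcases Nat.eq_zero_or_pos b with rfl | hb
    · exact dj_zero_right 0
    · rw [dj_step _ _ (by omega)]
      simp only [Nat.zero_mod, Nat.zero_div]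
      rw [ih (b/2) (by omega)]
      simp

/-- core XOR identity: `dj (y+1) q = dj (y+1) (q+1) ⊕ dj y (q+1)` -/
lemma dj_core (q y : ℕ) : dj (y+1) q = (dj (y+1) (q+1) != dj y (q+1)) := by
  induction q using Nat.strong_induction_on generalizing y with
  | _ q ih =>
    rcases Nat.even_or_odd q with ⟨a, ha⟩ | ⟨a, ha⟩
    · -- q = 2a
      subst_eqs
      rcases Nat.even_or_odd y with ⟨b, hb⟩ | ⟨b, hb⟩
      · -- y = 2b : LHS dj (2b+1) (2a) = dj b a ; RHS: dj (2b+1) (2a+1) = ff, dj (2b) (2a+1) = dj b a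
        have hy : y = 2*b := by omega
        have hq : a + a = 2*a := by omega
        rw [hy, hq, dj_oe, dj_oo, dj_eo]
        cases dj b a <;> rfl
      · have hy : y = 2*b+1 := by omega
        have hq : a + a = 2*a := by omega
        have hy1 : 2*b+1+1 = 2*(b+1) := by omega
        rw [hy, hq, hy1, dj_ee, dj_oo]
        have : dj (2*(b+1)) (2*a+1) = dj (b+1) a := dj_eo (b+1) a
        rw [this]
        cases dj (b+1) a <;> rfl
    · -- q = 2a+1
      subst_eqs
      rcases Nat.even_or_odd y with ⟨b, hb⟩ | ⟨b, hb⟩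
      · have hy : y = 2*b := by omega
        have hq : 2*a+1+1 = 2*(a+1) := by omega
        rw [hy, show (2*a+1) = 2*a+1 from rfl, dj_oo, hq, dj_oe, dj_ee]
        cases dj b (a+1) <;> rfl
      · have hy : y = 2*b+1 := by omega
        have hy1 : 2*b+1+1 = 2*(b+1) := by omega
        have hq : 2*a+1+1 = 2*(a+1) := by omega
        rw [hy, hy1, hq, dj_eo, dj_ee, dj_oe]
        exact ih a (by omega) b

/-- no disjoint complement-successor: `dj (2^k-1-u) (u+1) = false` for `u < 2^k - 1`. -/
lemma dj_compl : ∀ k u : ℕ, u < 2^k - 1 → dj (2^k - 1 - u) (u+1) = false := by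
  intro k
  induction k with
  | zero => intro u hu; simp at hu
  | succ k ih =>
    intro u hu
    have hk : 1 ≤ 2^k := Nat.one_le_two_pow
    rcases Nat.even_or_odd u with ⟨v, hv⟩ | ⟨v, hv⟩
    · -- u even : 2^(k+1)-1-u odd, u+1 odd
      have h1 : 2^(k+1) - 1 - u = 2*(2^k - 1 - v) + 1 := by
        have : 2^(k+1) = 2*2^k := by ring
        omega
      have h2 : u + 1 = 2*v + 1 := by omega
      rw [h1, h2, dj_oo]
    · -- u odd
      have h1 : 2^(k+1) - 1 - u = 2*(2^k - 1 - v) := by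
        have : 2^(k+1) = 2*2^k := by ring
        omega
      have h2 : u + 1 = 2*(v+1) := by omega
      rw [h1, h2, dj_ee]
      refine ih v ?_
      have h3 : 2^(k+1) = 2*2^k := by ring
      omega

lemma dj_sum : ∀ k u v : ℕ, dj u v = true → u < 2^k → v < 2^k → u + v < 2^k := by
  intro k
  induction k with
  | zero => intro u v _ hu hv; omega
  | succ k ih =>
    intro u v hd hu hv
    have h2 : 2^(k+1) = 2*2^k := by ring
    rcases Nat.even_or_odd u with ⟨a, ha⟩ | ⟨a, ha⟩ <;>
      rcases Nat.even_or_odd v with ⟨b, hb⟩ | ⟨b, hb⟩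
    · have : dj (2*a) (2*b) = true := by rw [← show u = 2*a by omega, ← show v = 2*b by omega]; exact hd
      rw [dj_ee] at this
      have := ih a b this (by omega) (by omega); omega
    · have : dj (2*a) (2*b+1) = true := by rw [← show u = 2*a by omega, ← show v = 2*b+1 by omega]; exact hd
      rw [dj_eo] at this
      have := ih a b this (by omega) (by omega); omega
    · have : dj (2*a+1) (2*b) = true := by rw [← show u = 2*a+1 by omega, ← show v = 2*b by omega]; exact hd
      rw [dj_oe] at this
      have := ih a b this (by omega) (by omega); omega
    · exfalso
      have : dj (2*a+1) (2*b+1) = true := by rw [← show u = 2*a+1 by omega, ← show v = 2*b+1 by omega]; exact hd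
      rw [dj_oo] at this; exact Bool.false_ne_true this

open Finset in
lemma card_dj_pairs : ∀ k : ℕ,
    ((range (2^k) ×ˢ range (2^k)).filter (fun p => dj p.1 p.2 = true)).card = 3^k := by
  intro k
  induction k with
  | zero =>
    simp only [pow_zero]
    rw [show (range 1 ×ˢ range 1) = {((0:ℕ),(0:ℕ))} by rfl]
    rw [Finset.filter_singleton]
    simp [dj_zero_left]
  | succ k ih =>
    have key : ((range (2^(k+1)) ×ˢ range (2^(k+1))).filter (fun p => dj p.1 p.2 = true)).card
        = ((range 3) ×ˢ ((range (2^k) ×ˢ range (2^k)).filter (fun p => dj p.1 p.2 = true))).card := by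
      apply Finset.card_nbij' (i := fun p => (p.1 % 2 + 2*(p.2 % 2), (p.1/2, p.2/2)))
        (j := fun q => (2*q.2.1 + q.1 % 2, 2*q.2.2 + q.1 / 2))
      · intro p hp
        simp only [Finset.mem_coe, Finset.mem_filter, Finset.mem_product, Finset.mem_range] at hp ⊢
        obtain ⟨⟨h1, h2⟩, hd⟩ := hp
        have h2k : 2^(k+1) = 2*2^k := by ring
        rcases Nat.even_or_odd p.1 with ⟨a, ha⟩ | ⟨a, ha⟩ <;>
          rcases Nat.even_or_odd p.2 with ⟨b, hb⟩ | ⟨b, hb⟩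
        · refine ⟨by omega, ⟨by omega, by omega⟩, ?_⟩
          have : p = (2*a, 2*b) := by ext <;> simp <;> omega
          rw [this, dj_ee] at hd
          have ha' : p.1/2 = a := by omega
          have hb' : p.2/2 = b := by omega
          rw [ha', hb']; exact hd
        · refine ⟨by omega, ⟨by omega, by omega⟩, ?_⟩
          have : p = (2*a, 2*b+1) := by ext <;> simp <;> omega
          rw [this, dj_eo] at hd
          have ha' : p.1/2 = a := by omega
          have hb' : p.2/2 = b := by omega
          rw [ha', hb']; exact hd
        · refine ⟨by omega, ⟨by omega, by omega⟩, ?_⟩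
          have : p = (2*a+1, 2*b) := by ext <;> simp <;> omega
          rw [this, dj_oe] at hd
          have ha' : p.1/2 = a := by omega
          have hb' : p.2/2 = b := by omega
          rw [ha', hb']; exact hd
        · exfalso
          have : p = (2*a+1, 2*b+1) := by ext <;> simp <;> omega
          rw [this, dj_oo] at hd
          exact Bool.false_ne_true hd
      · intro q hq
        simp only [Finset.mem_coe, Finset.mem_filter, Finset.mem_product, Finset.mem_range] at hq ⊢
        obtain ⟨h3, ⟨ha, hb⟩, hd⟩ := hq
        have h2k : 2^(k+1) = 2*2^k := by ring
        refine ⟨⟨by omega, by omega⟩, ?_⟩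
        interval_cases h : q.1
        · rw [show (2*q.2.1 + 0 % 2) = 2*q.2.1 by omega, show (2*q.2.2 + 0/2) = 2*q.2.2 by omega, dj_ee]; exact hd
        · rw [show (2*q.2.1 + 1 % 2) = 2*q.2.1+1 by omega, show (2*q.2.2 + 1/2) = 2*q.2.2 by omega, dj_oe]; exact hd
        · rw [show (2*q.2.1 + 2 % 2) = 2*q.2.1 by omega, show (2*q.2.2 + 2/2) = 2*q.2.2+1 by omega, dj_eo]; exact hd
      · intro p hp
        simp only [Finset.mem_coe, Finset.mem_filter, Finset.mem_product, Finset.mem_range] at hp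
        obtain ⟨⟨h1, h2⟩, hd⟩ := hp
        have hno : ¬ (p.1 % 2 = 1 ∧ p.2 % 2 = 1) := by
          intro ⟨hx, hy⟩
          have : p = (2*(p.1/2)+1, 2*(p.2/2)+1) := by ext <;> simp <;> omega
          rw [this, dj_oo] at hd
          exact Bool.false_ne_true hd
        ext <;> simp <;> omega
      · intro q hq
        simp only [Finset.mem_coe, Finset.mem_filter, Finset.mem_product, Finset.mem_range] at hq
        obtain ⟨h3, ⟨ha, hb⟩, hd⟩ := hq
        interval_cases h : q.1 <;> (ext <;> simp <;> omega)
    rw [key, Finset.card_product, Finset.card_range, ih]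
    ring

noncomputable def Eb (q t : ℕ) : Bool := decide (q ≤ t) && dj (t - q) (q + 1)

noncomputable def cblk (m q s : ℕ) : ZMod 2 := if m ≤ q then 0 else if Eb q (s+1) = true then 0 else 1

noncomputable def cseq (m n : ℕ) : ZMod 2 := cblk m (n / (m-1)) (n % (m-1))

lemma Eb_lt {q t : ℕ} (h : t < q) : Eb q t = false := by
  simp [Eb, Nat.not_le.mpr h]

lemma Eb_self (q : ℕ) : Eb q q = true := by
  simp [Eb, dj_zero_left]

lemma Eb_of_le {q t : ℕ} (h : q ≤ t) : Eb q t = dj (t - q) (q+1) := by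
  simp [Eb, h]

lemma dj_even_one (t : ℕ) : dj (2*t) 1 = true := by
  have h := dj_eo t 0
  rw [dj_zero_right] at h
  simpa using h

lemma dj_odd_one (t : ℕ) : dj (2*t+1) 1 = false := by
  have h := dj_oo t 0
  simpa using h

/-- E(q+1,s+1) xor E(q+1,s) = E(q,s). -/
lemma Eb_xor (q s : ℕ) : (Eb (q+1) (s+1) != Eb (q+1) s) = Eb q s := by
  rcases Nat.lt_trichotomy s q with h | rfl | h
  · rw [Eb_lt (by omega), Eb_lt (by omega), Eb_lt (by omega)]; rfl
  · rw [Eb_self, Eb_lt (by omega), Eb_self]; rfl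
  · obtain ⟨y, rfl⟩ : ∃ y, s = q + 1 + y := ⟨s - (q+1), by omega⟩
    rw [Eb_of_le (by omega), Eb_of_le (by omega), Eb_of_le (by omega)]
    have e1 : q + 1 + y + 1 - (q+1) = y + 1 := by omega
    have e2 : q + 1 + y - (q+1) = y := by omega
    have e3 : q + 1 + y - q = y + 1 := by omega
    rw [e1, e2, e3]
    exact (dj_core (q+1) y).symm

section blocks
variable {m : ℕ}

lemma cblk_one {q s : ℕ} (h1 : ¬ m ≤ q) (h2 : Eb q (s+1) = false) : cblk m q s = 1 := by
  simp [cblk, h1, h2]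

lemma cblk_zero_of_E {q s : ℕ} (h2 : Eb q (s+1) = true) : cblk m q s = 0 := by
  simp [cblk, h2]

lemma cblk_zero_of_top {q s : ℕ} (h1 : m ≤ q) : cblk m q s = 0 := by
  simp [cblk, h1]

lemma cblk_R5 (hm : 2 ≤ m) : cblk m 0 0 = 1 := by
  refine cblk_one (by omega) ?_
  rw [Eb_of_le (by omega)]
  simpa using dj_odd_one 0

lemma cblk_R3 (hm : 2 ≤ m) (s : ℕ) (hs1 : 1 ≤ s) : cblk m 0 s + cblk m 0 (s-1) = 1 := by
  have hm0 : ¬ m ≤ 0 := by omega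
  obtain ⟨s', rfl⟩ : ∃ s', s = s' + 1 := ⟨s - 1, by omega⟩
  simp only [Nat.add_sub_cancel]
  rcases Nat.even_or_odd s' with ⟨v, hv⟩ | ⟨v, hv⟩
  ·
    have h1 : Eb 0 (s'+1+1) = true := by
      rw [Eb_of_le (by omega), show s'+1+1-0 = 2*(v+1) by omega]; exact dj_even_one (v+1)
    have h2 : Eb 0 (s'+1) = false := by
      rw [Eb_of_le (by omega), show s'+1-0 = 2*v+1 by omega]; exact dj_odd_one v
    rw [cblk_zero_of_E h1, cblk_one hm0 h2]
    decide
  · have h1 : Eb 0 (s'+1+1) = false := by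
      rw [Eb_of_le (by omega), show s'+1+1-0 = 2*(v+1)+1 by omega]; exact dj_odd_one (v+1)
    have h2 : Eb 0 (s'+1) = true := by
      rw [Eb_of_le (by omega), show s'+1-0 = 2*(v+1) by omega]; exact dj_even_one (v+1)
    rw [cblk_zero_of_E h2, cblk_one hm0 h1, add_zero]

lemma cblk_R4 (k : ℕ) (hk : 1 ≤ k) (hm : m = 2^k) : cblk m 1 0 + cblk m 0 (m-2) = 1 := by
  have hm2 : 2 ≤ m := by
    rw [hm]
    calc 2 = 2^1 := by norm_num
    _ ≤ 2^k := Nat.pow_le_pow_right (by norm_num) hk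
  have h1 : cblk m 1 0 = 0 := cblk_zero_of_E (Eb_self 1)
  have h2k : m = 2*2^(k-1) := by
    rw [hm]
    conv_lhs => rw [show k = (k-1)+1 by omega]
    rw [pow_succ']
  have h2 : cblk m 0 (m-2) = 1 := by
    refine cblk_one (by omega) ?_
    rw [Eb_of_le (by omega), show m-2+1-0 = 2*(2^(k-1)-1)+1 by omega]
    exact dj_odd_one _
  rw [h1, h2, zero_add]

lemma cblk_R1 (hm : 2 ≤ m) (q s : ℕ) (hq2 : q + 1 ≤ m) (hs2 : s + 1 ≤ m-2) :
    cblk m (q+1) (s+1) + cblk m (q+1) s + cblk m q s = 1 := by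
  rcases Nat.eq_or_lt_of_le hq2 with rfl | hqm
  · have h3 : Eb q (s+1) = false := Eb_lt (by omega)
    rw [cblk_zero_of_top (le_refl _), cblk_zero_of_top (le_refl _), cblk_one (by omega) h3]
    decide
  · have hq'm : ¬ m ≤ q + 1 := by omega
    have hq''m : ¬ m ≤ q := by omega
    have hx := Eb_xor q (s+1)
    cases hA : Eb (q+1) (s+1+1) <;> cases hB : Eb (q+1) (s+1) <;> rw [hA, hB] at hx
    · rw [cblk_one hq'm hA, cblk_one hq'm hB, cblk_one hq''m (by simpa using hx.symm)]
      decide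
    · rw [cblk_one hq'm hA, cblk_zero_of_E hB, cblk_zero_of_E (by simpa using hx.symm)]
      decide
    · rw [cblk_zero_of_E hA, cblk_one hq'm hB, cblk_zero_of_E (by simpa using hx.symm)]
      decide
    · rw [cblk_zero_of_E hA, cblk_zero_of_E hB, cblk_one hq''m (by simpa using hx.symm)]
      decide

lemma cblk_R2 (k : ℕ) (hk : 1 ≤ k) (hm : m = 2^k) (q : ℕ) (hq1 : 2 ≤ q) (hq2 : q ≤ m) :
    cblk m q 0 + cblk m (q-1) (m-2) + cblk m (q-2) (m-2) = 1 := by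
  have hm2 : 2 ≤ m := by
    rw [hm]
    calc 2 = 2^1 := by norm_num
    _ ≤ 2^k := Nat.pow_le_pow_right (by norm_num) hk
  have hcompl : ∀ u, u ≤ m - 2 → Eb u (m-1) = false := by
    intro u hu
    rw [Eb_of_le (by omega)]
    have : m - 1 - u = 2^k - 1 - u := by omega
    rw [this]
    exact dj_compl k u (by omega)
  have hEtop : ∀ u, u ≤ m - 2 → cblk m u (m-2) = 1 := by
    intro u hu
    refine cblk_one (by omega) ?_
    rw [show m-2+1 = m-1 by omega]
    exact hcompl u hu
  rcases Nat.eq_or_lt_of_le hq2 with rfl | hqm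
  · -- q = m (m has been replaced by q)
    have h1 : cblk q q 0 = 0 := cblk_zero_of_top (le_refl _)
    have h2 : cblk q (q-1) (q-2) = 0 := by
      refine cblk_zero_of_E ?_
      rw [show q-2+1 = q-1 by omega]
      exact Eb_self (q-1)
    have h3 := hEtop (q-2) (le_refl _)
    rw [h1, h2, h3]
    decide
  · have h1 : cblk m q 0 = 1 := by
      refine cblk_one (by omega) ?_
      exact Eb_lt (by omega)
    have h2 : cblk m (q-1) (m-2) = 1 := hEtop (q-1) (by omega)
    have h3 : cblk m (q-2) (m-2) = 1 := hEtop (q-2) (by omega)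
    rw [h1, h2, h3]
    decide

end blocks

section recurrence
variable {m : ℕ}

lemma cseq_eq (hm : 2 ≤ m) (q s : ℕ) (hs : s < m-1) : cseq m ((m-1)*q + s) = cblk m q s := by
  unfold cseq
  rw [Nat.mul_add_div (by omega), Nat.mul_add_mod, Nat.div_eq_of_lt hs, Nat.mod_eq_of_lt hs,
    add_zero]

lemma cseq_rec (k m : ℕ) (hk : 1 ≤ k) (hm : m = 2^k) (n : ℕ) (hn : n < m*m - 1) :
    cseq m n + (if 1 ≤ n then cseq m (n-1) else 0) + (if m ≤ n then cseq m (n-m) else 0) = 1 := by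
  have hm2 : 2 ≤ m := by
    rw [hm]
    calc 2 = 2^1 := by norm_num
    _ ≤ 2^k := Nat.pow_le_pow_right (by norm_num) hk
  obtain ⟨q, s, hs, hn'⟩ : ∃ q s, s < m - 1 ∧ n = (m-1)*q + s :=
    ⟨n / (m-1), n % (m-1), Nat.mod_lt _ (by omega), by rw [Nat.div_add_mod]⟩
  have hkey : (m-1)*(m+1) = m*m - 1 := by
    obtain ⟨t, rfl⟩ : ∃ t, m = t+2 := ⟨m-2, by omega⟩
    have e1 : (t+2)*(t+2) = t*t+4*t+4 := by ring
    have e2 : (t+2-1)*((t+2)+1) = t*t+4*t+3 := by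
      rw [show t+2-1 = t+1 by omega]; ring
    omega
  have hqm : q ≤ m := by
    by_contra h
    have h1 : (m-1)*(m+1) ≤ (m-1)*q := Nat.mul_le_mul_left _ (by omega)
    omega
  rcases Nat.eq_zero_or_pos q with rfl | hq1
  · rcases Nat.eq_zero_or_pos s with rfl | hs1
    · -- n = 0
      have hn0 : n = 0 := by omega
      rw [if_neg (by omega), if_neg (by omega), add_zero, add_zero, hn0,
        show (0:ℕ) = (m-1)*0 + 0 by omega, cseq_eq hm2 _ _ (by omega), cblk_R5 hm2]
    · -- q = 0, s ≥ 1 : n = s < m-1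
      have hnm : ¬ m ≤ n := by omega
      rw [if_pos (by omega), if_neg hnm, add_zero,
        show n = (m-1)*0 + s by omega, cseq_eq hm2 _ _ hs,
        show (m-1)*0 + s - 1 = (m-1)*0 + (s-1) by omega, cseq_eq hm2 _ _ (by omega)]
      exact cblk_R3 hm2 s hs1
  · rcases Nat.eq_zero_or_pos s with rfl | hs1
    · -- s = 0, q ≥ 1
      rcases Nat.eq_or_lt_of_le hq1 with hq1' | hq2'
      · -- q = 1 : n = m-1
        have hqq : q = 1 := hq1'.symm
        subst hqq
        have hn1 : n = m-1 := by omega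
        rw [if_pos (by omega), if_neg (by omega), add_zero, hn1,
          show m-1 = (m-1)*1 + 0 by omega, cseq_eq hm2 _ _ (by omega),
          show (m-1)*1 + 0 - 1 = (m-1)*0 + (m-2) by omega, cseq_eq hm2 _ _ (by omega)]
        exact cblk_R4 k hk hm
      · -- q ≥ 2
        have hq2 : 2 ≤ q := hq2'
        have e1 : (m-1)*(q-1) + (m-1) = (m-1)*q := by
          rw [← Nat.mul_succ]; congr 1; omega
        have e2 : (m-1)*(q-2) + (m-1)*2 = (m-1)*q := by
          rw [← Nat.mul_add]; congr 1; omega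
        have g2 : m ≤ n := by omega
        rw [if_pos (by omega), if_pos g2, hn',
          cseq_eq hm2 _ _ (by omega),
          show (m-1)*q + 0 - 1 = (m-1)*(q-1) + (m-2) by omega,
          cseq_eq hm2 _ _ (by omega),
          show (m-1)*q + 0 - m = (m-1)*(q-2) + (m-2) by omega,
          cseq_eq hm2 _ _ (by omega)]
        exact cblk_R2 k hk hm q hq2 hqm
    · -- q ≥ 1, s ≥ 1
      have e1 : (m-1)*(q-1) + (m-1) = (m-1)*q := by
        rw [← Nat.mul_succ]; congr 1; omega
      have g2 : m ≤ n := by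
        have : (m-1)*1 ≤ (m-1)*q := Nat.mul_le_mul_left _ hq1
        omega
      rw [if_pos (by omega), if_pos g2, hn',
        cseq_eq hm2 _ _ hs,
        show (m-1)*q + s - 1 = (m-1)*q + (s-1) by omega,
        cseq_eq hm2 _ _ (by omega),
        show (m-1)*q + s - m = (m-1)*(q-1) + (s-1) by omega,
        cseq_eq hm2 _ _ (by omega)]
      obtain ⟨q', rfl⟩ : ∃ q', q = q' + 1 := ⟨q-1, by omega⟩
      obtain ⟨s', rfl⟩ : ∃ s', s = s' + 1 := ⟨s-1, by omega⟩
      simp only [Nat.add_sub_cancel]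
      exact cblk_R1 hm2 q' s' (by omega) (by omega)

end recurrence

open Finset

lemma zeros_card (k m : ℕ) (hk : 1 ≤ k) (hm : m = 2^k) :
    ((range (m*(m-1))).filter (fun n => cseq m n = 0)).card = 3^k - 2^k := by
  have hm2 : 2 ≤ m := by
    rw [hm]
    calc 2 = 2^1 := by norm_num
    _ ≤ 2^k := Nat.pow_le_pow_right (by norm_num) hk
  set Tset := (range m ×ˢ range m).filter (fun p => dj p.1 p.2 = true) with hT
  have hTcard : Tset.card = 3^k := by rw [hT, hm]; exact card_dj_pairs k
  have hsplit := Finset.card_filter_add_card_filter_not (s := Tset)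
    (p := fun p => p.2 = 0)
  have hS0 : (Tset.filter (fun p => p.2 = 0)).card = 2^k := by
    rw [show (2:ℕ)^k = (range m).card by rw [hm, card_range]]
    apply Finset.card_nbij' (i := fun p => p.1) (j := fun u => (u, 0))
    · intro p hp
      simp only [Finset.mem_coe, Finset.mem_filter, Finset.mem_product, Finset.mem_range, hT] at hp ⊢
      exact hp.1.1.1
    · intro u hu
      simp only [Finset.mem_coe, Finset.mem_filter, Finset.mem_product, Finset.mem_range, hT] at hu ⊢
      exact ⟨⟨⟨hu, by omega⟩, dj_zero_right u⟩, trivial⟩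
    · intro p hp
      simp only [Finset.mem_coe, Finset.mem_filter, hT] at hp
      ext
      · rfl
      · exact hp.2.symm
    · intro u hu; rfl
  set S1 := Tset.filter (fun p => ¬ p.2 = 0) with hS1
  have hS1card : S1.card = 3^k - 2^k := by omega
  -- facts about zeros of cseq
  have decomp : ∀ n, n < m*(m-1) → cseq m n = 0 →
      ∃ q s, s < m-1 ∧ n = (m-1)*q + s ∧ n/(m-1) = q ∧ n%(m-1) = s ∧ q < m ∧
        q ≤ s + 1 ∧ dj (s + 1 - q) (q + 1) = true := by
    intro n hn hz
    refine ⟨n/(m-1), n%(m-1), Nat.mod_lt _ (by omega), (Nat.div_add_mod n (m-1)).symm,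
      rfl, rfl, ?_, ?_, ?_⟩
    · exact (Nat.div_lt_iff_lt_mul (by omega)).mpr (by omega)
    · by_contra h
      have hE : Eb (n/(m-1)) (n%(m-1)+1) = false := Eb_lt (by omega)
      have hqm : ¬ m ≤ n/(m-1) := by
        have := (Nat.div_lt_iff_lt_mul (show 0 < m-1 by omega)).mpr (show n < m*(m-1) by omega)
        omega
      have : cseq m n = 1 := by unfold cseq cblk; simp [hE, hqm]
      rw [hz] at this; exact zero_ne_one this
    · by_cases hle : n/(m-1) ≤ n%(m-1)+1
      · by_contra h
        have hE : Eb (n/(m-1)) (n%(m-1)+1) = false := by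
          rw [Eb_of_le hle]
          exact Bool.not_eq_true _ ▸ (by simpa using h)
        have hqm : ¬ m ≤ n/(m-1) := by
          have := (Nat.div_lt_iff_lt_mul (show 0 < m-1 by omega)).mpr (show n < m*(m-1) by omega)
          omega
        have : cseq m n = 1 := by unfold cseq cblk; simp [hE, hqm]
        rw [hz] at this; exact zero_ne_one this
      · exfalso
        have hE : Eb (n/(m-1)) (n%(m-1)+1) = false := Eb_lt (by omega)
        have hqm : ¬ m ≤ n/(m-1) := by
          have := (Nat.div_lt_iff_lt_mul (show 0 < m-1 by omega)).mpr (show n < m*(m-1) by omega)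
          omega
        have : cseq m n = 1 := by unfold cseq cblk; simp [hE, hqm]
        rw [hz] at this; exact zero_ne_one this
  have hbij : ((range (m*(m-1))).filter (fun n => cseq m n = 0)).card = S1.card := by
    apply Finset.card_nbij'
      (i := fun n => if n / (m-1) = m - 1 then ((0:ℕ), (1:ℕ))
        else (n % (m-1) + 1 - n / (m-1), n / (m-1) + 1))
      (j := fun p => if p = (0, 1) then (m-1)*(m-1) + (m-2)
        else (m-1)*(p.2 - 1) + (p.2 + p.1 - 2))
    · -- forward membership
      intro n hn
      simp only [Finset.mem_coe, Finset.mem_filter, Finset.mem_range] at hn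
      obtain ⟨q, s, hs, hqs, hdiv, hmod, hqm, hle, hdj⟩ := decomp n hn.1 hn.2
      beta_reduce
      rw [hdiv, hmod]
      by_cases htop : q = m - 1
      · simp only [if_pos htop]
        simp only [hS1, hT, Finset.mem_coe, Finset.mem_filter, Finset.mem_product, Finset.mem_range]
        exact ⟨⟨⟨by omega, by omega⟩, dj_zero_left 1⟩, by omega⟩
      · simp only [if_neg htop]
        simp only [hS1, hT, Finset.mem_coe, Finset.mem_filter, Finset.mem_product, Finset.mem_range]
        exact ⟨⟨⟨by omega, by omega⟩, hdj⟩, by omega⟩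
    · -- backward membership
      intro p hp
      obtain ⟨p1, p2⟩ := p
      simp only [hS1, hT, Finset.mem_coe, Finset.mem_filter, Finset.mem_product, Finset.mem_range] at hp
      obtain ⟨⟨⟨hp1, hp2⟩, hpd⟩, hp20⟩ := hp
      by_cases hsp : ((p1, p2) : ℕ × ℕ) = (0, 1)
      · simp only [if_pos hsp, Finset.mem_coe, Finset.mem_filter, Finset.mem_range]
        constructor
        · have e : (m-1)*(m-1) + (m-1) = (m-1)*m := by
            rw [← Nat.mul_succ]; congr 1; omega
          have e2 : (m-1)*m = m*(m-1) := Nat.mul_comm _ _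
          omega
        · rw [cseq_eq hm2 _ _ (by omega)]
          apply cblk_zero_of_E
          rw [show m-2+1 = m-1 by omega]
          exact Eb_self (m-1)
      · simp only [if_neg hsp, Finset.mem_coe, Finset.mem_filter, Finset.mem_range]
        have hp21 : 1 ≤ p2 := by omega
        have hsum : p1 + p2 < m := by
          rw [hm] at hp1 hp2 ⊢
          exact dj_sum k _ _ hpd hp1 hp2
        have hge2 : 2 ≤ p1 + p2 := by
          rcases Nat.lt_or_ge (p1 + p2) 2 with h | h
          · exfalso
            apply hsp
            have : p1 = 0 ∧ p2 = 1 := by omega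
            rw [this.1, this.2]
          · exact h
        have hslt : p2 + p1 - 2 < m - 1 := by omega
        constructor
        · have e : (m-1)*(p2-1) + (m-1) ≤ (m-1)*m := by
            rw [← Nat.mul_succ]
            exact Nat.mul_le_mul_left _ (by omega)
          have e2 : (m-1)*m = m*(m-1) := Nat.mul_comm _ _
          omega
        · rw [cseq_eq hm2 _ _ hslt]
          apply cblk_zero_of_E
          rw [Eb_of_le (by omega), show p2 + p1 - 2 + 1 - (p2 - 1) = p1 by omega,
            show p2 - 1 + 1 = p2 by omega]
          exact hpd
    · -- left inverse
      intro n hn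
      simp only [Finset.mem_coe, Finset.mem_filter, Finset.mem_range] at hn
      obtain ⟨q, s, hs, hqs, hdiv, hmod, hqm, hle, hdj⟩ := decomp n hn.1 hn.2
      beta_reduce
      rw [hdiv, hmod]
      by_cases htop : q = m - 1
      · rw [if_pos htop, if_pos rfl]
        -- Eb (m-1) (s+1) is true, so s+1 ≥ m-1, so s = m-2
        have hs2 : s = m - 2 := by omega
        rw [htop] at hqs
        omega
      · rw [if_neg htop]
        have hne : ¬ ((s + 1 - q, q + 1) = ((0:ℕ), (1:ℕ))) := by
          intro h
          have h1 : s + 1 - q = 0 := congrArg Prod.fst h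
          have h2 : q + 1 = 1 := congrArg Prod.snd h
          omega
        rw [if_neg hne]
        simp only
        have e1 : q + 1 - 1 = q := by omega
        have e2 : q + 1 + (s + 1 - q) - 2 = s := by omega
        rw [e1, e2]
        omega
    · -- right inverse
      intro p hp
      obtain ⟨p1, p2⟩ := p
      simp only [hS1, hT, Finset.mem_coe, Finset.mem_filter, Finset.mem_product, Finset.mem_range] at hp
      obtain ⟨⟨⟨hp1, hp2⟩, hpd⟩, hp20⟩ := hp
      beta_reduce
      by_cases hsp : ((p1, p2) : ℕ × ℕ) = (0, 1)
      · rw [if_pos hsp]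
        have hdiv : ((m-1)*(m-1) + (m-2)) / (m-1) = m - 1 := by
          rw [Nat.mul_add_div (by omega), Nat.div_eq_of_lt (by omega), Nat.add_zero]
        rw [if_pos hdiv]
        exact hsp.symm
      · rw [if_neg hsp]
        have hp21 : 1 ≤ p2 := by omega
        have hsum : p1 + p2 < m := by
          rw [hm] at hp1 hp2 ⊢
          exact dj_sum k _ _ hpd hp1 hp2
        have hge2 : 2 ≤ p1 + p2 := by
          rcases Nat.lt_or_ge (p1 + p2) 2 with h | h
          · exfalso
            apply hsp
            have : p1 = 0 ∧ p2 = 1 := by omega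
            rw [this.1, this.2]
          · exact h
        simp only
        have hdiv : ((m-1)*(p2-1) + (p2 + p1 - 2)) / (m-1) = p2 - 1 := by
          rw [Nat.mul_add_div (by omega), Nat.div_eq_of_lt (by omega), Nat.add_zero]
        have hmod : ((m-1)*(p2-1) + (p2 + p1 - 2)) % (m-1) = p2 + p1 - 2 := by
          rw [Nat.mul_add_mod, Nat.mod_eq_of_lt (by omega)]
        have htop : ¬ ((m-1)*(p2-1) + (p2 + p1 - 2)) / (m-1) = m - 1 := by
          rw [hdiv]; omega
        rw [if_neg htop, hdiv, hmod]
        have e1 : p2 + p1 - 2 + 1 - (p2 - 1) = p1 := by omega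
        have e2 : p2 - 1 + 1 = p2 := by omega
        rw [e1, e2]
  rw [hbij, hS1card]

lemma ones_card (k m : ℕ) (hk : 1 ≤ k) (hm : m = 2^k) :
    ((range (m*(m-1))).filter (fun n => cseq m n = 1)).card = 4^k - 3^k := by
  have hm2 : 2 ≤ m := by
    rw [hm]
    calc 2 = 2^1 := by norm_num
    _ ≤ 2^k := Nat.pow_le_pow_right (by norm_num) hk
  have hz := zeros_card k m hk hm
  have hsplit := Finset.card_filter_add_card_filter_not
    (s := range (m*(m-1))) (p := fun n => cseq m n = 0)
  have hiff : ∀ x : ZMod 2, (x = 1) ↔ (¬ x = 0) := by decide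
  have heq : (range (m*(m-1))).filter (fun n => cseq m n = 1)
      = (range (m*(m-1))).filter (fun n => ¬ cseq m n = 0) := by
    ext n
    simp only [Finset.mem_filter]
    rw [hiff (cseq m n)]
  rw [heq]
  have hr : (range (m*(m-1))).card = m*(m-1) := card_range _
  have e : m*(m-1) + m = m*m := by rw [← Nat.mul_succ]; congr 1; omega
  have hmm : m*m = 4^k := by rw [hm, show (4:ℕ) = 2*2 by norm_num, mul_pow]
  have h23 : (2:ℕ)^k ≤ 3^k := Nat.pow_le_pow_left (by norm_num) k
  have h34 : (3:ℕ)^k ≤ 4^k := Nat.pow_le_pow_left (by norm_num) k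
  have hm' : m = 2^k := hm
  omega

lemma cblk_Eb_of_zero {m q s : ℕ} (h : cblk m q s = 0) (hq : ¬ m ≤ q) : Eb q (s+1) = true := by
  by_contra hE
  rw [cblk_one hq (by simpa using hE)] at h
  exact one_ne_zero h

lemma run_lemma (k m : ℕ) (hk : 1 ≤ k) (hm : m = 2^k) (t : ℕ)
    (hz : ∀ i, i < m → cseq m (t + i) = 0) (ht : t + m < m*m - 1) : False := by
  have hm2 : 2 ≤ m := by
    rw [hm]
    calc 2 = 2^1 := by norm_num
    _ ≤ 2^k := Nat.pow_le_pow_right (by norm_num) hk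
  obtain ⟨q, r, hr, hqs⟩ : ∃ q r, r < m - 1 ∧ t = (m-1)*q + r :=
    ⟨t/(m-1), t%(m-1), Nat.mod_lt _ (by omega), (Nat.div_add_mod t (m-1)).symm⟩
  have hmulsucc : ∀ a : ℕ, (m-1)*a + (m-1) = (m-1)*(a+1) := by
    intro a; rw [← Nat.mul_succ]
  have hqle : q ≤ m - 1 := by
    by_contra h
    have h1 : (m-1)*m ≤ (m-1)*q := Nat.mul_le_mul_left _ (by omega)
    have h2 : (m-1)*m + (m-1) = (m-1)*(m+1) := hmulsucc m
    have h3 : (m-1)*(m+1) = m*m - 1 := by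
      obtain ⟨u, rfl⟩ : ∃ u, m = u+2 := ⟨m-2, by omega⟩
      have e1 : (u+2)*(u+2) = u*u+4*u+4 := by ring
      have e2 : (u+2-1)*((u+2)+1) = u*u+4*u+3 := by
        rw [show u+2-1 = u+1 by omega]; ring
      omega
    omega
  rcases Nat.eq_zero_or_pos r with rfl | hr1
  · -- r = 0 : window contains all of block q
    rcases Nat.eq_zero_or_pos q with rfl | hq1
    · -- q = 0 : position 0 has a one
      have h0 := hz 0 (by omega)
      rw [show t + 0 = (m-1)*0 + 0 by omega, cseq_eq hm2 _ _ (by omega)] at h0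
      have hE := cblk_Eb_of_zero h0 (by omega)
      rw [Eb_of_le (by omega), show 0+1-0 = 2*0+1 by omega] at hE
      rw [dj_odd_one] at hE
      exact Bool.false_ne_true hE
    · rcases Nat.lt_or_ge q 2 with hq2 | hq2
      · -- q = 1
        have hq1' : q = 1 := by omega
        subst hq1'
        rcases Nat.lt_or_ge m 3 with hm3 | hm3
        · -- m = 2 : t = 1, t+m = 3 = m*m-1, contradiction with ht
          have h22 : m*m = 4 := by rw [show m = 2 by omega]
          omega
        · have hm4 : 4 ≤ m := by
            rw [hm]
            rcases Nat.lt_or_ge k 2 with hk2 | hk2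
            · interval_cases k <;> omega
            · calc 4 = 2^2 := by norm_num
              _ ≤ 2^k := Nat.pow_le_pow_right (by norm_num) hk2
          have h2 := hz 2 (by omega)
          rw [show t + 2 = (m-1)*1 + 2 by omega, cseq_eq hm2 _ _ (by omega)] at h2
          have hE := cblk_Eb_of_zero h2 (by omega)
          rw [Eb_of_le (by omega), show 2+1-1 = 2*1 by omega, show (1:ℕ)+1 = 2*1 by omega,
            dj_ee] at hE
          rw [show (1:ℕ) = 2*0+1 by omega, dj_oo] at hE
          exact Bool.false_ne_true hE
      · -- q ≥ 2 : position s = q-2 of block q has a one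
        have hi := hz (q-2) (by omega)
        rw [show t + (q-2) = (m-1)*q + (q-2) by omega, cseq_eq hm2 _ _ (by omega)] at hi
        have hE := cblk_Eb_of_zero hi (by omega)
        rw [Eb_lt (by omega)] at hE
        exact Bool.false_ne_true hE
  · -- r ≥ 1
    have hcross := hz (m-1-r) (by omega)
    rw [show t + (m-1-r) = (m-1)*(q+1) + 0 by rw [← hmulsucc q]; omega] at hcross
    rcases Nat.lt_or_ge (q+1) m with hqm | hqm
    · rw [cseq_eq hm2 _ _ (by omega)] at hcross
      have hE := cblk_Eb_of_zero hcross (by omega)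
      -- Eb (q+1) 1 = true forces q+1 ≤ 1, i.e. q = 0
      have hq0 : q = 0 := by
        by_contra h
        rw [Eb_lt (by omega)] at hE
        exact Bool.false_ne_true hE
      subst hq0
      -- position m-2 of block 0 is a one
      have h1 := hz (m-2-r) (by omega)
      rw [show t + (m-2-r) = (m-1)*0 + (m-2) by omega, cseq_eq hm2 _ _ (by omega)] at h1
      have hE2 := cblk_Eb_of_zero h1 (by omega)
      rw [Eb_of_le (by omega), show m-2+1-0 = 2*(m/2-1)+1 by
        (rw [hm]; rcases Nat.lt_or_ge k 1 with h|h; · omega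
         · have : (2:ℕ)^k = 2*2^(k-1) := by
             conv_lhs => rw [show k = (k-1)+1 by omega]
             rw [pow_succ']
           omega)] at hE2
      rw [dj_odd_one] at hE2
      exact Bool.false_ne_true hE2
    · -- q+1 = m, i.e. q = m-1 : position r of block m-1 zero forces r = m-2
      have hq : q = m-1 := by omega
      have h0 := hz 0 (by omega)
      rw [show t + 0 = (m-1)*q + r by omega, cseq_eq hm2 _ _ hr] at h0
      have hE := cblk_Eb_of_zero h0 (by omega)
      have hrge : m - 1 ≤ r + 1 := by
        by_contra h
        rw [hq, Eb_lt (by omega)] at hE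
        exact Bool.false_ne_true hE
      -- r = m-2, so t = (m-1)*(m-1) + (m-2), t+m = m*m-1
      have hr2 : r = m - 2 := by omega
      have h3 : (m-1)*(m-1) + (m-1) = (m-1)*m := by rw [hmulsucc]; congr 1; omega
      have h4 : (m-1)*m + m = m*m := by
        obtain ⟨u, rfl⟩ : ∃ u, m = u+2 := ⟨m-2, by omega⟩
        have e1 : (u+2)*(u+2) = u*u+4*u+4 := by ring
        have e2 : (u+2-1)*(u+2) = u*u+3*u+2 := by
          rw [show u+2-1 = u+1 by omega]; ring
        omega
      rw [hq] at hqs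
      omega

open Polynomial

/-- Minimality: any compact mod-2 tiling complement `B` of the pattern `{0,1,2^k}` has at
least `4^k - 3^k` elements (equivalently its period `N` is at least `4^k - 1`). -/
theorem stmt_15 (k : ℕ) (hk : 1 ≤ k) (B : Finset ℕ) (N : ℕ) (hN : 0 < N)
    (htile : (1 + X + X ^ (2 ^ k)) * (∑ b ∈ B, (X : Polynomial (ZMod 2)) ^ b)
        = ∑ i ∈ Finset.range N, (X : Polynomial (ZMod 2)) ^ i) :
    4 ^ k - 3 ^ k ≤ B.card ∧ 4 ^ k - 1 ≤ N := by
  set m : ℕ := 2^k with hmdef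
  have hm2 : 2 ≤ m := by
    calc 2 = 2^1 := by norm_num
    _ ≤ 2^k := Nat.pow_le_pow_right (by norm_num) hk
  set S : Polynomial (ZMod 2) := ∑ b ∈ B, (X : Polynomial (ZMod 2)) ^ b with hSdef
  set d : ℕ → ZMod 2 := fun n => S.coeff n with hddef
  have dmem : ∀ n, d n = if n ∈ B then 1 else 0 := by
    intro n
    rw [hddef]
    simp only [hSdef, Polynomial.finset_sum_coeff, Polynomial.coeff_X_pow]
    rw [Finset.sum_ite_eq B n (fun _ => (1 : ZMod 2))]
  have recB : ∀ n, d n + (if 1 ≤ n then d (n-1) else 0) + (if m ≤ n then d (n-m) else 0)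
      = if n < N then 1 else 0 := by
    intro n
    have hexp : (1 + X + X ^ m) * S = S + S * X^1 + S * X^m := by ring
    have hc := congrArg (fun p => Polynomial.coeff p n) htile
    simp only [hexp] at hc
    rw [Polynomial.coeff_add, Polynomial.coeff_add, Polynomial.coeff_mul_X_pow',
      Polynomial.coeff_mul_X_pow'] at hc
    rw [show (∑ i ∈ Finset.range N, (X : Polynomial (ZMod 2)) ^ i).coeff n
        = if n < N then 1 else 0 by
      simp only [Polynomial.finset_sum_coeff, Polynomial.coeff_X_pow]
      rw [Finset.sum_ite_eq (Finset.range N) n (fun _ => (1 : ZMod 2))]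
      simp [Finset.mem_range]] at hc
    exact hc
  have hone : (1 : ZMod 2) ≠ 0 := by decide
  have h0B : (0:ℕ) ∈ B := by
    have h := recB 0
    rw [if_neg (by omega), if_neg (by omega), if_pos hN, add_zero, add_zero, dmem] at h
    by_contra hn
    rw [if_neg hn] at h
    exact hone h.symm
  have hBlt : ∀ b ∈ B, b + m < N := by
    have hne : B.Nonempty := ⟨0, h0B⟩
    set M := B.max' hne with hMdef
    have hMB : M ∈ B := B.max'_mem hne
    have key : M + m < N := by
      have h := recB (M + m)
      have hnotin : (M + m) ∉ B := by
        intro hmem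
        have := B.le_max' _ hmem
        omega
      have hnotin2 : (M + m - 1) ∉ B := by
        intro hmem
        have := B.le_max' _ hmem
        omega
      rw [if_pos (show 1 ≤ M+m by omega), if_pos (show m ≤ M+m by omega),
        show M+m-m = M by omega] at h
      rw [dmem, dmem, dmem, if_neg hnotin, if_neg hnotin2, if_pos hMB] at h
      by_contra hlt
      rw [if_neg hlt] at h
      simpa using h
    intro b hb
    have := B.le_max' b hb
    omega
  have hNm : m + 1 ≤ N := by
    have := hBlt 0 h0B
    omega
  have agree : ∀ n, n < N → n < m*m - 1 → d n = cseq m n := by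
    intro n
    induction n using Nat.strong_induction_on with
    | _ n ih =>
      intro hnN hnM
      have h1 := recB n
      rw [if_pos hnN] at h1
      have h2 := cseq_rec k m hk hmdef n hnM
      have e1 : (if 1 ≤ n then d (n-1) else 0) = (if 1 ≤ n then cseq m (n-1) else 0) := by
        split_ifs with h
        · exact ih (n-1) (by omega) (by omega) (by omega)
        · rfl
      have e2 : (if m ≤ n then d (n-m) else 0) = (if m ≤ n then cseq m (n-m) else 0) := by
        split_ifs with h
        · exact ih (n-m) (by omega) (by omega) (by omega)
        · rfl
      rw [e1, e2] at h1
      linear_combination h1 - h2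
  have hN0 : m*m - 1 ≤ N := by
    by_contra hlt
    push_neg at hlt
    refine run_lemma k m hk hmdef (N - m) ?_ (by omega)
    intro i hi
    have hi1 : N - m + i < N := by omega
    have hi2 : N - m + i < m*m - 1 := by omega
    rw [← agree _ hi1 hi2, dmem, if_neg]
    intro hmem
    have := hBlt _ hmem
    omega
  have hmm : m * m = 4^k := by
    rw [hmdef, show (4:ℕ) = 2*2 by norm_num, mul_pow]
  refine ⟨?_, by omega⟩
  -- card bound
  have hsub : (Finset.range (m*(m-1))).filter (fun n => cseq m n = 1) ⊆ B := by
    intro n hn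
    simp only [Finset.mem_filter, Finset.mem_range] at hn
    have hlink : m*(m-1) + m = m*m := by rw [← Nat.mul_succ]; congr 1; omega
    have h1 : n < N := by omega
    have h2 : n < m*m - 1 := by omega
    have := agree n h1 h2
    rw [hn.2] at this
    rw [dmem] at this
    by_contra hmem
    rw [if_neg hmem] at this
    exact hone this.symm
  have := Finset.card_le_card hsub
  rw [ones_card k m hk hmdef] at this
  exact this
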